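/- Let f(z) = z + a₂z² + ⋯ satisfy z f'(z) = p(z) f(z) with p(z) = 1 + c₁z + ⋯ analytic on the unit disk. Then for real ξ, ζ with 1 - 2ξ - 2ζ ≠ 0, a₅ - ξ a₂a₄ - ζ a₃² = c₄/4 + (1-ξ)c₃c₁/3 + (1-2ζ)c₂²/8 + (1-2ξ-2ζ)(c₁²/4)·(c₂ + ((1-4ξ-6ζ)/(3(1-2ξ-2ζ)))·(c₁²/2)). -/

import Mathlib

open Complex Metric Filter FormalMultilinearSeries
open scoped ENNReal NNReal

lemma my_hasFPSB (b : ℕ → ℂ) (g : ℂ → ℂ)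
    (hb : ∀ z ∈ Metric.ball (0:ℂ) 1, HasSum (fun n => b n * z ^ n) (g z)) :
    HasFPowerSeriesOnBall g (ofScalars ℂ b) 0 1 := by
  refine ⟨?_, one_pos, fun {y} hy => ?_⟩
  · refine ENNReal.le_of_forall_nnreal_lt (fun r hr => ?_)
    have hr1 : (r : ℝ) < 1 := by exact_mod_cast hr
    have hz : ((r : ℝ) : ℂ) ∈ Metric.ball (0:ℂ) 1 := by
      rw [mem_ball_zero_iff, Complex.norm_real, Real.norm_eq_abs, _root_.abs_of_nonneg r.coe_nonneg]
      exact hr1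
    have h0 : Filter.Tendsto (fun n => b n * ((r:ℝ):ℂ) ^ n) atTop (nhds 0) :=
      (hb _ hz).summable.tendsto_atTop_zero
    apply FormalMultilinearSeries.le_radius_of_isBigO
    have := h0.isBigO_one ℝ
    have h2 := this.norm_left
    have he : (fun n => ‖ofScalars ℂ b n‖ * (r:ℝ)^n) = fun n => ‖b n * ((r:ℝ):ℂ)^n‖ := by
      funext n
      rw [ofScalars_norm, norm_mul, norm_pow, Complex.norm_real, Real.norm_eq_abs,
        _root_.abs_of_nonneg r.coe_nonneg]
    rw [he]
    exact h2
  · have hy' : y ∈ Metric.ball (0:ℂ) 1 := by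
      rw [mem_ball_zero_iff]
      have := EMetric.mem_ball.mp hy
      rw [edist_zero_right] at this
      rwa [← ofReal_norm, ENNReal.ofReal_lt_one] at this
    have := hb y hy'
    rw [zero_add]
    refine this.congr_fun fun n => ?_
    rw [ofScalars_apply_eq, smul_eq_mul]

lemma my_coeff_eq (b d : ℕ → ℂ) (g : ℂ → ℂ)
    (hb : ∀ z ∈ Metric.ball (0:ℂ) 1, HasSum (fun n => b n * z ^ n) (g z))
    (hd : ∀ z ∈ Metric.ball (0:ℂ) 1, HasSum (fun n => d n * z ^ n) (g z)) : b = d := by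
  have h1 := (my_hasFPSB b g hb).hasFPowerSeriesAt
  have h2 := (my_hasFPSB d g hd).hasFPowerSeriesAt
  have h3 := h1.eq_formalMultilinearSeries h2
  exact (ofScalars_series_eq_iff ℂ b d).mp h3

lemma my_deriv_hasSum (a : ℕ → ℂ) (f : ℂ → ℂ)
    (hfsum : ∀ z ∈ Metric.ball (0:ℂ) 1, HasSum (fun n => a n * z ^ n) (f z)) :
    ∀ z ∈ Metric.ball (0:ℂ) 1, HasSum (fun (n : ℕ) => (n:ℂ) * a n * z ^ n) (z * deriv f z) := by
  have hf := my_hasFPSB a f hfsum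
  have hdf := hf.fderiv
  intro z hz
  have hz' : z ∈ Metric.eball (0:ℂ) 1 := by
    rw [Metric.mem_eball, edist_zero_right, ← ofReal_norm, ENNReal.ofReal_lt_one]
    exact mem_ball_zero_iff.mp hz
  have hs := hdf.hasSum hz'
  have hs2 := hs.mapL (ContinuousLinearMap.apply ℂ ℂ z)
  have hval : fderiv ℂ f (0 + z) z = z * deriv f z := by
    rw [zero_add]
    calc fderiv ℂ f z z = fderiv ℂ f z (z • 1) := by rw [smul_eq_mul, mul_one]
      _ = z • fderiv ℂ f z 1 := map_smul _ _ _
      _ = z * deriv f z := by rw [smul_eq_mul, fderiv_apply_one_eq_deriv]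
  simp only [ContinuousLinearMap.apply_apply] at hs2
  rw [hval] at hs2
  have key : HasSum (fun n => ((n+1 : ℕ) : ℂ) * a (n+1) * z ^ (n+1)) (z * deriv f z) := by
    refine hs2.congr_fun fun n => ?_
    rw [FormalMultilinearSeries.derivSeries_apply_diag, ofScalars_apply_eq]
    push_cast
    simp [smul_eq_mul]
    ring
  have key2 := (hasSum_nat_add_iff (f := fun n => (n:ℂ) * a n * z ^ n) 1).mp key
  simpa using key2

lemma my_mul_hasSum (a c : ℕ → ℂ) (f p : ℂ → ℂ)
    (hfsum : ∀ z ∈ Metric.ball (0:ℂ) 1, HasSum (fun n => a n * z ^ n) (f z))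
    (hsum : ∀ z ∈ Metric.ball (0:ℂ) 1, HasSum (fun n => c n * z ^ n) (p z)) :
    ∀ z ∈ Metric.ball (0:ℂ) 1,
      HasSum (fun n => (∑ k ∈ Finset.range (n+1), c k * a (n-k)) * z ^ n) (p z * f z) := by
  have hf := my_hasFPSB a f hfsum
  have hp := my_hasFPSB c p hsum
  intro z hz
  have hzn : (‖z‖₊ : ℝ≥0∞) < 1 := by
    rw [← ENNReal.coe_one, ENNReal.coe_lt_coe]
    exact_mod_cast mem_ball_zero_iff.mp hz
  have hsa : Summable (fun n => ‖a n * z ^ n‖) := by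
    have := (ofScalars ℂ a).summable_norm_mul_pow (hzn.trans_le hf.r_le)
    refine this.congr fun n => ?_
    rw [ofScalars_norm, norm_mul, norm_pow, coe_nnnorm]
  have hsc : Summable (fun n => ‖c n * z ^ n‖) := by
    have := (ofScalars ℂ c).summable_norm_mul_pow (hzn.trans_le hp.r_le)
    refine this.congr fun n => ?_
    rw [ofScalars_norm, norm_mul, norm_pow, coe_nnnorm]
  have hcp := hasSum_sum_range_mul_of_summable_norm hsc hsa
  rw [(hsum z hz).tsum_eq, (hfsum z hz).tsum_eq] at hcp
  refine hcp.congr_fun fun n => ?_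
  rw [Finset.sum_mul]
  refine Finset.sum_congr rfl fun k hk => ?_
  have hk' : k ≤ n := Nat.lt_succ_iff.mp (Finset.mem_range.mp hk)
  have hzz : z ^ k * z ^ (n-k) = z ^ n := by rw [← pow_add, Nat.add_sub_cancel' hk']
  calc c k * a (n-k) * z ^ n = c k * a (n-k) * (z ^ k * z ^ (n-k)) := by rw [hzz]
    _ = c k * z ^ k * (a (n-k) * z ^ (n-k)) := by ring

theorem stmt_11 (f : ℂ → ℂ) (a : ℕ → ℂ)
    (ha0 : a 0 = 0) (ha1 : a 1 = 1)
    (hfsum : ∀ z ∈ Metric.ball (0:ℂ) 1, HasSum (fun n => a n * z ^ n) (f z))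
    (p : ℂ → ℂ) (c : ℕ → ℂ)
    (hc0 : c 0 = 1)
    (hsum : ∀ z ∈ Metric.ball (0:ℂ) 1, HasSum (fun n => c n * z ^ n) (p z))
    (hode : ∀ z ∈ Metric.ball (0:ℂ) 1, z * deriv f z = p z * f z)
    (ξ ζ : ℝ) (h : 1 - 2*ξ - 2*ζ ≠ 0) :
    a 5 - (ξ:ℂ) * (a 2 * a 4) - (ζ:ℂ) * (a 3) ^ 2 = c 4 / 4 + ((1:ℂ) - ξ) * (c 3 * c 1) / 3 + ((1:ℂ) - 2*ζ) * (c 2) ^ 2 / 8 + ((1:ℂ) - 2*ξ - 2*ζ) * (c 1 ^ 2 / 4) * (c 2 + (((1:ℂ) - 4*ξ - 6*ζ) / (3*((1:ℂ) - 2*ξ - 2*ζ))) * (c 1 ^ 2 / 2)) := by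
  have hkey := my_coeff_eq (fun n => (n:ℂ) * a n)
      (fun n => ∑ k ∈ Finset.range (n+1), c k * a (n-k)) (fun z => z * deriv f z)
      (my_deriv_hasSum a f hfsum)
      (fun z hz => by
        have hm := my_mul_hasSum a c f p hfsum hsum z hz
        rw [← hode z hz] at hm
        exact hm)
  have e : ∀ n : ℕ, (n:ℂ) * a n = ∑ k ∈ Finset.range (n+1), c k * a (n-k) :=
    fun n => congrFun hkey n
  have e2 := e 2
  have e3 := e 3
  have e4 := e 4
  have e5 := e 5
  simp only [Finset.sum_range_succ, Finset.sum_range_zero, ha0, ha1, hc0, mul_zero, mul_one,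
    one_mul, zero_add, add_zero, Nat.cast_ofNat] at e2 e3 e4 e5
  norm_num at e2 e3 e4 e5
  have h2 : a 2 = c 1 := by linear_combination e2
  have h3 : a 3 = (c 2 + c 1 ^ 2) / 2 := by linear_combination e3 / 2 + (c 1 / 2) * h2
  have h4 : a 4 = c 3 / 3 + c 1 * c 2 / 2 + c 1 ^ 3 / 6 := by
    linear_combination e4 / 3 + (c 1 / 3) * h3 + (c 2 / 3) * h2
  have h5 : a 5 = c 4 / 4 + c 1 * c 3 / 3 + c 1 ^ 2 * c 2 / 4 + c 1 ^ 4 / 24 + c 2 ^ 2 / 8 := by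
    linear_combination e5 / 4 + (c 1 / 4) * h4 + (c 2 / 4) * h3 + (c 3 / 4) * h2
  have hC : ((1:ℂ) - 2*(ξ:ℂ) - 2*(ζ:ℂ)) ≠ 0 := by
    intro hx
    apply h
    have : (((1 - 2*ξ - 2*ζ : ℝ)) : ℂ) = 0 := by push_cast; linear_combination hx
    exact_mod_cast this
  have hterm : ((1:ℂ) - 2*(ξ:ℂ) - 2*(ζ:ℂ)) * (c 1 ^ 2 / 4) * (c 2 + (((1:ℂ) - 4*(ξ:ℂ) - 6*(ζ:ℂ)) / (3*((1:ℂ) - 2*(ξ:ℂ) - 2*(ζ:ℂ)))) * (c 1 ^ 2 / 2)) = ((1:ℂ) - 2*(ξ:ℂ) - 2*(ζ:ℂ)) * (c 1 ^ 2 * c 2 / 4) + ((1:ℂ) - 4*(ξ:ℂ) - 6*(ζ:ℂ)) * (c 1 ^ 4 / 24) := by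
    field_simp [hC]
    ring
  rw [h5, h4, h3, h2, hterm]
  ring
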